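/- For every α, β, γ > 0, the supremum over a ∈ ℤ of (1 ∨ |a|)^γ · ∑_{k ∈ ℤ} 1/((1 ∨ |k|)^α · (1 ∨ |a−k|)^β) is finite provided one of the following holds: (i) max(α,β) < 1, α + β > 1, and γ = α + β − 1; (ii) max(α,β) > 1 and γ = min(α,β); (iii) max(α,β) = 1, min(α,β) + 1 > 1 (i.e. min(α,β) > 0), and γ < min(α,β). -/

import Mathlib

open Real Finset

namespace Stmt12

noncomputable def mz (k : ℤ) : ℝ := max 1 |(k : ℝ)|

lemma one_le_mz (k : ℤ) : 1 ≤ mz k := le_max_left _ _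
lemma mz_pos (k : ℤ) : 0 < mz k := lt_of_lt_of_le one_pos (one_le_mz k)
lemma mz_nonneg (k : ℤ) : 0 ≤ mz k := (mz_pos k).le
lemma mz_neg (k : ℤ) : mz (-k) = mz k := by simp [mz]
lemma mz_zero : mz 0 = 1 := by simp [mz]
lemma mz_succ (n : ℕ) : mz ((n : ℤ) + 1) = (n : ℝ) + 1 := by
  have h : ((0:ℝ)) ≤ (n : ℝ) + 1 := by positivity
  rw [mz]
  push_cast
  rw [abs_of_nonneg h]
  exact max_eq_right (by linarith [Nat.cast_nonneg (α := ℝ) n])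

/-- Bernoulli-type inequality for decreasing exponent, 0 < s < 1. -/
lemma keyA {s x : ℝ} (hs0 : 0 < s) (hs1 : s < 1) (hx : 1 ≤ x) :
    (1 - s) * x ^ (-s) ≤ x ^ (1 - s) - (x - 1) ^ (1 - s) := by
  have hx0 : 0 < x := lt_of_lt_of_le one_pos hx
  have h1 : (x - 1) ^ (1 - s) = x ^ (1 - s) * (1 - 1 / x) ^ (1 - s) := by
    rw [← Real.mul_rpow (le_of_lt hx0) (by rw [sub_nonneg, div_le_one hx0]; linarith)]
    congr 1
    field_simp
  have h2 : (1 - 1 / x) ^ (1 - s) ≤ 1 - (1 - s) / x := by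
    have hb := rpow_one_add_le_one_add_mul_self (s := -(1/x)) (p := 1 - s)
      (by rw [neg_le, neg_neg, div_le_one hx0]; linarith)
      (by linarith) (by linarith)
    calc (1 - 1 / x) ^ (1 - s) = (1 + -(1/x)) ^ (1 - s) := by ring_nf
      _ ≤ 1 + (1 - s) * -(1/x) := hb
      _ = 1 - (1 - s) / x := by ring
  have h3 : x ^ (1 - s) * ((1 - s) / x) = (1 - s) * x ^ (-s) := by
    rw [show (1 : ℝ) - s = -s + 1 by ring, Real.rpow_add hx0, Real.rpow_one]
    field_simp
  have h4 : (x - 1) ^ (1 - s) ≤ x ^ (1 - s) * (1 - (1 - s) / x) := by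
    rw [h1]
    exact mul_le_mul_of_nonneg_left h2 (Real.rpow_nonneg hx0.le _)
  have h5 : x ^ (1 - s) * (1 - (1 - s) / x) = x ^ (1 - s) - (1 - s) * x ^ (-s) := by
    rw [mul_sub, mul_one]
    rw [show (1:ℝ) - s = -s + 1 by ring] at h3 ⊢
    rw [h3]
  linarith [h4.trans_eq h5]

/-- Bernoulli-type inequality for tails, s > 1. -/
lemma keyB {s x : ℝ} (hs : 1 < s) (hx : 2 ≤ x) :
    (s - 1) * x ^ (-s) ≤ (x - 1) ^ (1 - s) - x ^ (1 - s) := by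
  have hx0 : 0 < x := by linarith
  have hy0 : (0:ℝ) < x - 1 := by linarith
  have hy1 : (1:ℝ) ≤ x - 1 := by linarith
  have hclaim : 1 + (s - 1) / x ≤ (x / (x - 1)) ^ (s - 1) := by
    rcases le_total (s - 1) 1 with hp | hp
    · have hb := rpow_one_add_le_one_add_mul_self (s := -(1/x)) (p := s - 1)
        (by rw [neg_le, neg_neg, div_le_one hx0]; linarith) (by linarith) hp
      have he : (1 : ℝ) + -(1/x) = (x - 1) / x := by field_simp; ring
      have hb' : ((x - 1) / x) ^ (s - 1) ≤ 1 - (s - 1) / x := by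
        calc ((x - 1) / x) ^ (s - 1) = (1 + -(1/x)) ^ (s - 1) := by rw [he]
          _ ≤ 1 + (s - 1) * -(1/x) := hb
          _ = 1 - (s - 1) / x := by ring
      have hinv : (1 + (s - 1)/x) * (1 - (s - 1)/x) ≤ 1 := by nlinarith [sq_nonneg ((s-1)/x)]
      have h1 : (1 + (s - 1)/x) * ((x - 1)/x) ^ (s - 1) ≤ 1 := by
        calc (1 + (s - 1)/x) * ((x - 1)/x) ^ (s - 1) ≤ (1 + (s - 1)/x) * (1 - (s - 1)/x) :=
              mul_le_mul_of_nonneg_left hb'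
                (by have : (0:ℝ) ≤ (s-1)/x := div_nonneg (by linarith) hx0.le; linarith)
          _ ≤ 1 := hinv
      have h2 : (x / (x - 1)) ^ (s - 1) = 1 / (((x - 1) / x) ^ (s - 1)) := by
        rw [show x / (x - 1) = ((x - 1)/x)⁻¹ by rw [inv_div]]
        rw [Real.inv_rpow (by positivity)]
        rw [one_div]
      rw [h2, le_div_iff₀ (by positivity)]
      exact h1
    · have hb := one_add_mul_self_le_rpow_one_add (s := 1/(x-1)) (p := s - 1)
        (le_trans (by norm_num) (by positivity : (0:ℝ) ≤ 1/(x-1))) hp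
      have he : (1 : ℝ) + 1/(x-1) = x / (x - 1) := by field_simp; ring
      calc 1 + (s - 1) / x ≤ 1 + (s - 1) * (1/(x-1)) := by
            rw [div_eq_mul_one_div]
            have : 1 / x ≤ 1 / (x - 1) := by
              apply one_div_le_one_div_of_le hy0; linarith
            nlinarith
        _ ≤ (1 + 1/(x-1)) ^ (s - 1) := hb
        _ = (x / (x - 1)) ^ (s - 1) := by rw [he]
  have hxy : (x - 1) ^ (1 - s) = x ^ (1 - s) * (x / (x - 1)) ^ (s - 1) := by
    rw [Real.div_rpow hx0.le hy0.le, mul_div_assoc', ← Real.rpow_add hx0,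
      show (1:ℝ) - s + (s - 1) = 0 by ring, Real.rpow_zero,
      eq_div_iff (ne_of_gt (Real.rpow_pos_of_pos hy0 _)), ← Real.rpow_add hy0,
      show (1:ℝ) - s + (s - 1) = 0 by ring, Real.rpow_zero]
  have hfin : x ^ (1 - s) * (1 + (s - 1)/x) ≤ (x - 1) ^ (1 - s) := by
    rw [hxy]
    exact mul_le_mul_of_nonneg_left hclaim (Real.rpow_nonneg hx0.le _)
  have h3 : x ^ (1 - s) * ((s - 1) / x) = (s - 1) * x ^ (-s) := by
    rw [show (1 : ℝ) - s = -s + 1 by ring, Real.rpow_add hx0, Real.rpow_one]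
    field_simp
  nlinarith [hfin, h3]


/-- Partial sums of `(n+1)^(-s)` for `0 < s < 1`. -/
lemma partial_sum_le {s : ℝ} (hs0 : 0 < s) (hs1 : s < 1) (M : ℕ) :
    ∑ n ∈ Finset.range M, ((n : ℝ) + 1) ^ (-s) ≤ (M : ℝ) ^ (1 - s) / (1 - s) := by
  have h1s : (0:ℝ) < 1 - s := by linarith
  have key : ∀ n ∈ Finset.range M, ((n : ℝ) + 1) ^ (-s) ≤
      (((n:ℕ) + 1 : ℕ) : ℝ) ^ (1 - s) / (1 - s) - ((n : ℝ)) ^ (1 - s) / (1 - s) := by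
    intro n _
    have hx : (1:ℝ) ≤ (n : ℝ) + 1 := by
      have := Nat.cast_nonneg (α := ℝ) n; linarith
    have := keyA hs0 hs1 hx
    rw [show ((n:ℝ) + 1) - 1 = (n:ℝ) by ring] at this
    rw [div_sub_div_same, le_div_iff₀ h1s]
    push_cast
    linarith
  calc ∑ n ∈ Finset.range M, ((n : ℝ) + 1) ^ (-s)
      ≤ ∑ n ∈ Finset.range M,
        ((((n + 1 : ℕ)) : ℝ) ^ (1 - s) / (1 - s) - ((n:ℕ) : ℝ) ^ (1 - s) / (1 - s)) :=
        Finset.sum_le_sum key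
    _ = ((M : ℝ) ^ (1 - s) / (1 - s)) - (((0:ℕ) : ℝ) ^ (1 - s) / (1 - s)) :=
        Finset.sum_range_sub (fun n : ℕ => ((n : ℝ)) ^ (1 - s) / (1 - s)) M
    _ ≤ (M : ℝ) ^ (1 - s) / (1 - s) := by
        simp [Real.zero_rpow (by linarith : (1:ℝ) - s ≠ 0)]

lemma summable_aux {s : ℝ} (hs : 1 < s) : Summable (fun n : ℕ => ((n:ℝ) + 1) ^ (-s)) := by
  have h : Summable (fun n : ℕ => ((n:ℝ)) ^ (-s)) :=
    Real.summable_nat_rpow.2 (by linarith)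
  have := (summable_nat_add_iff 1).2 h
  exact this.congr (fun n => by push_cast; ring_nf)

/-- Tail sums of `(n + N + 1)^{-s}` for `s > 1`. -/
lemma tail_sum_le {s : ℝ} (hs : 1 < s) (N : ℕ) (hN : 1 ≤ N) :
    ∑' n : ℕ, ((n : ℝ) + (N : ℝ) + 1) ^ (-s) ≤ (N : ℝ) ^ (1 - s) / (s - 1) := by
  have hs1 : (0:ℝ) < s - 1 := by linarith
  apply Real.tsum_le_of_sum_range_le (fun n => Real.rpow_nonneg (by positivity) _)
  intro M
  have key : ∀ n ∈ Finset.range M, ((n : ℝ) + (N:ℝ) + 1) ^ (-s) ≤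
      ((n:ℕ) + N : ℕ) ^ (1 - s) / (s - 1) - (((n:ℕ) + 1 + N : ℕ) : ℝ) ^ (1 - s) / (s - 1) := by
    intro n _
    have hx : (2:ℝ) ≤ (n : ℝ) + (N:ℝ) + 1 := by
      have : (1:ℝ) ≤ (N:ℝ) := by exact_mod_cast hN
      have : (0:ℝ) ≤ (n:ℝ) := Nat.cast_nonneg n
      linarith
    have := keyB hs hx
    rw [show ((n:ℝ) + (N:ℝ) + 1) - 1 = (n:ℝ) + (N:ℝ) by ring] at this
    rw [div_sub_div_same, le_div_iff₀ hs1]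
    push_cast
    rw [show (n:ℝ) + 1 + (N:ℝ) = (n:ℝ) + (N:ℝ) + 1 by ring]
    linarith
  calc ∑ n ∈ Finset.range M, ((n : ℝ) + (N:ℝ) + 1) ^ (-s)
      ≤ ∑ n ∈ Finset.range M,
          ((((n + N : ℕ)) : ℝ) ^ (1 - s) / (s - 1) - (((n + 1 + N: ℕ)) : ℝ) ^ (1 - s) / (s - 1)) :=
        Finset.sum_le_sum key
    _ = (((0 + N : ℕ) : ℝ) ^ (1 - s) / (s - 1)) - (((M + N : ℕ) : ℝ) ^ (1 - s) / (s - 1)) :=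
        Finset.sum_range_sub' (fun n : ℕ => (((n + N : ℕ)) : ℝ) ^ (1 - s) / (s - 1)) M
    _ ≤ (N : ℝ) ^ (1 - s) / (s - 1) := by
        have h0 : (0:ℝ) ≤ ((M + N : ℕ) : ℝ) ^ (1 - s) / (s - 1) := by positivity
        simp only [Nat.zero_add]
        linarith
lemma summable_mz {s : ℝ} (hs : 1 < s) : Summable (fun k : ℤ => (mz k) ^ (-s)) := by
  apply Summable.of_nat_of_neg_add_one
  · rw [← summable_nat_add_iff 1]
    exact (summable_aux hs).congr (fun n => by
      rw [show ((n + 1 : ℕ) : ℤ) = (n : ℤ) + 1 by push_cast; ring, mz_succ])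
  · exact (summable_aux hs).congr (fun n => by
      rw [show (-(((n : ℕ) : ℤ) + 1)) = -(((n:ℤ)) + 1) by push_cast; ring, mz_neg, mz_succ])

/-- Splitting a symmetric sum over `ℤ`. -/
lemma tsum_sym (g : ℤ → ℝ) (hsym : ∀ k, g (-k) = g k)
    (hs : Summable fun n : ℕ => g ((n : ℤ) + 1)) :
    ∑' k : ℤ, g k = g 0 + 2 * ∑' n : ℕ, g ((n : ℤ) + 1) := by
  have hnat : Summable (fun n : ℕ => g (n : ℤ)) := by
    rw [← summable_nat_add_iff 1]
    exact hs.congr (fun n => by rw [show ((n + 1 : ℕ) : ℤ) = (n : ℤ) + 1 by push_cast; ring])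
  have hneg : Summable (fun n : ℕ => g (-((n : ℤ) + 1))) :=
    hs.congr (fun n => (hsym ((n:ℤ) + 1)).symm)
  rw [tsum_of_nat_of_neg_add_one hnat hneg]
  rw [Summable.tsum_eq_zero_add hnat]
  have e1 : ∑' n : ℕ, g ((n + 1 : ℕ) : ℤ) = ∑' n : ℕ, g ((n : ℤ) + 1) :=
    tsum_congr (fun n => by rw [show ((n + 1 : ℕ) : ℤ) = (n : ℤ) + 1 by push_cast; ring])
  have e2 : ∑' n : ℕ, g (-((n : ℤ) + 1)) = ∑' n : ℕ, g ((n : ℤ) + 1) :=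
    tsum_congr (fun n => hsym _)
  rw [e1, e2]
  push_cast
  ring

noncomputable def NNf (s w : ℝ) (k : ℤ) : ℝ := if mz k ≤ w then (mz k) ^ (-s) else 0
noncomputable def TTf (s w : ℝ) (k : ℤ) : ℝ := if w < mz k then (mz k) ^ (-s) else 0

lemma NNf_nonneg (s w : ℝ) (k : ℤ) : 0 ≤ NNf s w k := by
  unfold NNf; split
  · exact Real.rpow_nonneg (mz_nonneg k) _
  · exact le_refl 0

lemma TTf_nonneg (s w : ℝ) (k : ℤ) : 0 ≤ TTf s w k := by
  unfold TTf; split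
  · exact Real.rpow_nonneg (mz_nonneg k) _
  · exact le_refl 0

lemma NNf_neg (s w : ℝ) (k : ℤ) : NNf s w (-k) = NNf s w k := by unfold NNf; rw [mz_neg]
lemma TTf_neg (s w : ℝ) (k : ℤ) : TTf s w (-k) = TTf s w k := by unfold TTf; rw [mz_neg]

lemma NNf_le (s w : ℝ) (k : ℤ) : NNf s w k ≤ (mz k) ^ (-s) := by
  unfold NNf; split
  · exact le_refl _
  · exact Real.rpow_nonneg (mz_nonneg k) _

lemma TTf_le (s w : ℝ) (k : ℤ) : TTf s w k ≤ (mz k) ^ (-s) := by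
  unfold TTf; split
  · exact le_refl _
  · exact Real.rpow_nonneg (mz_nonneg k) _

lemma summable_NNf (s w : ℝ) : Summable (NNf s w) := by
  apply summable_of_ne_finset_zero (s := Finset.Icc (-(⌈w⌉)) ⌈w⌉)
  intro k hk
  rw [Finset.mem_Icc] at hk
  unfold NNf
  rw [if_neg]
  intro hle
  apply hk
  have h1 : |(k:ℝ)| ≤ w := le_trans (le_max_right _ _) hle
  have h2 : ((|k| : ℤ) : ℝ) ≤ ((⌈w⌉ : ℤ) : ℝ) := by
    rw [Int.cast_abs]
    exact le_trans h1 (Int.le_ceil w)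
  have h3 : |k| ≤ ⌈w⌉ := by exact_mod_cast h2
  exact abs_le.1 h3

lemma summable_TTf {s : ℝ} (hs : 1 < s) (w : ℝ) : Summable (TTf s w) :=
  Summable.of_nonneg_of_le (TTf_nonneg s w) (TTf_le s w) (summable_mz hs)

lemma summable_NNf_nat (s w : ℝ) : Summable (fun n : ℕ => NNf s w ((n : ℤ) + 1)) :=
  (summable_NNf s w).comp_injective
    (show Function.Injective (fun n : ℕ => (n : ℤ) + 1) by
      intro a b hab; simpa using hab)

lemma summable_TTf_nat {s : ℝ} (hs : 1 < s) (w : ℝ) :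
    Summable (fun n : ℕ => TTf s w ((n : ℤ) + 1)) :=
  (summable_TTf hs w).comp_injective
    (show Function.Injective (fun n : ℕ => (n : ℤ) + 1) by
      intro a b hab; simpa using hab)

/-- Bound for the near sum, `0 < s < 1`. -/
lemma NN_le {s w : ℝ} (hs0 : 0 < s) (hs1 : s < 1) (hw : 1 ≤ w) :
    ∑' k : ℤ, NNf s w k ≤ (1 + 2 / (1 - s)) * w ^ (1 - s) := by
  have hw0 : (0:ℝ) < w := by linarith
  have h1s : (0:ℝ) < 1 - s := by linarith
  rw [tsum_sym (NNf s w) (NNf_neg s w) (summable_NNf_nat s w)]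
  have h0 : NNf s w 0 = 1 := by
    unfold NNf; rw [mz_zero, if_pos hw, Real.one_rpow]
  set N₀ := ⌊w⌋₊ with hN₀
  have htail : ∑' n : ℕ, NNf s w ((n : ℤ) + 1) ≤ w ^ (1 - s) / (1 - s) := by
    apply Real.tsum_le_of_sum_range_le (fun n => NNf_nonneg s w _)
    intro M
    have hterm : ∀ n : ℕ, NNf s w ((n : ℤ) + 1) =
        if (n:ℝ) + 1 ≤ w then ((n:ℝ) + 1) ^ (-s) else 0 := by
      intro n; unfold NNf; rw [mz_succ]
    calc ∑ n ∈ Finset.range M, NNf s w ((n : ℤ) + 1)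
        = ∑ n ∈ Finset.range M, (if (n:ℝ) + 1 ≤ w then ((n:ℝ) + 1) ^ (-s) else 0) :=
          Finset.sum_congr rfl (fun n _ => hterm n)
      _ = ∑ n ∈ (Finset.range M).filter (fun n : ℕ => ((n:ℝ) + 1 ≤ w)), ((n:ℝ) + 1) ^ (-s) :=
          (Finset.sum_filter _ _).symm
      _ ≤ ∑ n ∈ Finset.range N₀, ((n:ℝ) + 1) ^ (-s) := by
          apply Finset.sum_le_sum_of_subset_of_nonneg
          · intro n hn
            rw [Finset.mem_filter] at hn
            rw [Finset.mem_range]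
            have : (n + 1 : ℕ) ≤ N₀ := Nat.le_floor (by push_cast; exact hn.2)
            omega
          · intro n _ _; positivity
      _ ≤ (N₀ : ℝ) ^ (1 - s) / (1 - s) := partial_sum_le hs0 hs1 N₀
      _ ≤ w ^ (1 - s) / (1 - s) := by
          gcongr
          exact Nat.floor_le hw0.le
  have hw1 : (1:ℝ) ≤ w ^ (1 - s) := by
    calc (1:ℝ) = w ^ (0:ℝ) := (Real.rpow_zero w).symm
      _ ≤ w ^ (1 - s) := Real.rpow_le_rpow_of_exponent_le hw (by linarith)
  rw [h0]
  have expand : (1 + 2/(1-s)) * w^(1-s) = w^(1-s) + 2 * (w^(1-s)/(1-s)) := by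
    field_simp
  rw [expand]
  linarith

/-- Full-sum bound, `s > 1`. -/
lemma NN_le_Z {s : ℝ} (hs : 1 < s) (w : ℝ) :
    ∑' k : ℤ, NNf s w k ≤ 1 + 2 * (1 + 1/(s-1)) := by
  have hsm : Summable (fun n : ℕ => (mz ((n:ℤ)+1)) ^ (-s)) :=
    (summable_aux hs).congr (fun n => by rw [mz_succ])
  have h1 : ∑' k : ℤ, NNf s w k ≤ ∑' k : ℤ, (mz k)^(-s) :=
    Summable.tsum_le_tsum (NNf_le s w) (summable_NNf s w) (summable_mz hs)
  have h2 : ∑' k : ℤ, (mz k)^(-s) = 1 + 2 * ∑' n : ℕ, ((n:ℝ)+1)^(-s) := by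
    rw [tsum_sym (fun k => (mz k)^(-s))
      (fun k => by show mz (-k) ^ (-s) = mz k ^ (-s); rw [mz_neg]) hsm]
    rw [mz_zero, Real.one_rpow]
    congr 1
    rw [mul_comm, mul_comm (2:ℝ)]
    congr 1
    exact tsum_congr (fun n => by rw [mz_succ])
  have h3 : ∑' n : ℕ, ((n:ℝ)+1)^(-s) ≤ 1 + 1/(s-1) := by
    rw [Summable.tsum_eq_zero_add (summable_aux hs)]
    have e0 : (((0:ℕ):ℝ)+1)^(-s) = 1 := by norm_num
    have e1 : ∑' n : ℕ, (((n+1:ℕ):ℝ)+1)^(-s) = ∑' n : ℕ, ((n:ℝ) + ((1:ℕ):ℝ) + 1)^(-s) :=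
      tsum_congr (fun n => by push_cast; ring_nf)
    rw [e0, e1]
    have := tail_sum_le hs 1 (le_refl 1)
    rw [Nat.cast_one, Real.one_rpow] at this
    linarith
  linarith

/-- Monotonicity of the near sum in the exponent. -/
lemma NN_mono {s s' : ℝ} (hss : s' ≤ s) (w : ℝ) :
    ∑' k : ℤ, NNf s w k ≤ ∑' k : ℤ, NNf s' w k := by
  apply Summable.tsum_le_tsum _ (summable_NNf s w) (summable_NNf s' w)
  intro k
  unfold NNf
  split_ifs
  · exact Real.rpow_le_rpow_of_exponent_le (one_le_mz k) (by linarith)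
  · exact le_refl 0

set_option maxHeartbeats 1000000 in
/-- Bound for the tail sum, `s > 1`. -/
lemma TT_le {s w : ℝ} (hs : 1 < s) (hw : 1 ≤ w) :
    ∑' k : ℤ, TTf s w k ≤ (2 * 2^(s-1) / (s-1)) * w^(1-s) := by
  have hw0 : (0:ℝ) < w := by linarith
  have hs1 : (0:ℝ) < s - 1 := by linarith
  rw [tsum_sym (TTf s w) (TTf_neg s w) (summable_TTf_nat hs w)]
  have h0 : TTf s w 0 = 0 := by
    unfold TTf; rw [mz_zero, if_neg (not_lt.2 hw)]
  set N₀ := ⌊w⌋₊ with hN₀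
  have hN₀1 : 1 ≤ N₀ := Nat.le_floor (by exact_mod_cast hw)
  have hN₀w : (N₀ : ℝ) ≤ w := Nat.floor_le hw0.le
  have h2N : w / 2 ≤ (N₀ : ℝ) := by
    have h1 := Nat.lt_floor_add_one w
    have h2 : (1:ℝ) ≤ (N₀ : ℝ) := by exact_mod_cast hN₀1
    rw [← hN₀] at h1
    linarith
  have hshift : Summable (fun n : ℕ => ((n:ℝ) + (N₀:ℝ) + 1) ^ (-s)) := by
    have := (summable_nat_add_iff (f := fun n : ℕ => ((n:ℝ)+1)^(-s)) N₀).2 (summable_aux hs)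
    exact this.congr (fun n => by push_cast; ring_nf)
  have htail : ∑' n : ℕ, TTf s w ((n : ℤ) + 1) ≤ (N₀:ℝ)^(1-s)/(s-1) := by
    rw [← Summable.sum_add_tsum_nat_add (f := fun n : ℕ => TTf s w ((n:ℤ)+1)) N₀ (summable_TTf_nat hs w)]
    have hzero : ∑ i ∈ Finset.range N₀, TTf s w ((i : ℤ) + 1) = 0 := by
      apply Finset.sum_eq_zero
      intro i hi
      rw [Finset.mem_range] at hi
      unfold TTf
      rw [mz_succ, if_neg]
      push_neg
      have : ((i:ℝ) + 1) ≤ (N₀ : ℝ) := by exact_mod_cast Nat.succ_le_of_lt hi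
      linarith
    rw [hzero, zero_add]
    calc ∑' n : ℕ, TTf s w (((n + N₀ : ℕ) : ℤ) + 1)
        ≤ ∑' n : ℕ, ((n:ℝ) + (N₀:ℝ) + 1) ^ (-s) := by
          apply Summable.tsum_le_tsum _
            ((summable_nat_add_iff (f := fun n : ℕ => TTf s w ((n:ℤ)+1)) N₀).2
              (summable_TTf_nat hs w)) hshift
          intro n
          calc TTf s w (((n + N₀ : ℕ) : ℤ) + 1) ≤ (mz (((n + N₀ : ℕ) : ℤ) + 1)) ^ (-s) :=
                TTf_le s w _
            _ = ((n:ℝ) + (N₀:ℝ) + 1) ^ (-s) := by rw [mz_succ]; push_cast; ring_nf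
      _ ≤ (N₀:ℝ)^(1-s)/(s-1) := tail_sum_le hs N₀ hN₀1
  have hpow : (N₀:ℝ)^(1-s) ≤ 2^(s-1) * w^(1-s) := by
    have ha : (N₀:ℝ)^(1-s) ≤ (w/2)^(1-s) :=
      Real.rpow_le_rpow_of_nonpos (by positivity) h2N (by linarith)
    have hb : (w/2)^(1-s) = 2^(s-1) * w^(1-s) := by
      rw [Real.div_rpow hw0.le (by norm_num), div_eq_mul_inv, mul_comm]
      congr 1
      rw [← Real.rpow_neg (by norm_num : (0:ℝ) ≤ 2), neg_sub]
    linarith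
  rw [h0]
  calc 0 + 2 * ∑' n : ℕ, TTf s w ((n : ℤ) + 1) ≤ 2 * ((N₀:ℝ)^(1-s)/(s-1)) := by linarith
    _ ≤ 2 * ((2^(s-1) * w^(1-s))/(s-1)) := by gcongr
    _ = (2 * 2^(s-1) / (s-1)) * w^(1-s) := by ring
/-- Uniform bound on the near sum with the required exponent. -/
lemma NBound {s t γ : ℝ} (hs : 0 < s) (hγ : 0 < γ) (F1 : γ ≤ s + t - 1)
    (F2 : 1 < s → γ ≤ t) (F3 : s = 1 → γ < t) :
    ∃ C : ℝ, 0 ≤ C ∧ ∀ w : ℝ, 1 ≤ w → ∑' k : ℤ, NNf s w k ≤ C * w ^ (t - γ) := by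
  rcases lt_trichotomy s 1 with hlt | heq | hgt
  · have h1s : (0:ℝ) < 1 - s := by linarith
    refine ⟨1 + 2 / (1 - s), by positivity, fun w hw => ?_⟩
    calc ∑' k : ℤ, NNf s w k ≤ (1 + 2/(1-s)) * w ^ (1 - s) := NN_le hs hlt hw
      _ ≤ (1 + 2/(1-s)) * w ^ (t - γ) :=
          mul_le_mul_of_nonneg_left
            (Real.rpow_le_rpow_of_exponent_le hw (by linarith)) (by positivity)
  · have htγ : 0 < t - γ := sub_pos.2 (F3 heq)
    set e := min (t - γ) 2⁻¹ with he_def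
    have he0 : 0 < e := lt_min htγ (by norm_num)
    have he1 : e ≤ 2⁻¹ := min_le_right _ _
    have hetγ : e ≤ t - γ := min_le_left _ _
    have hee : (0:ℝ) < 1 - (1 - e) := by linarith
    refine ⟨1 + 2 / (1 - (1 - e)), by positivity, fun w hw => ?_⟩
    calc ∑' k : ℤ, NNf s w k ≤ ∑' k : ℤ, NNf (1 - e) w k := NN_mono (by linarith) w
      _ ≤ (1 + 2/(1-(1-e))) * w ^ (1 - (1 - e)) := NN_le (by linarith) (by linarith) hw
      _ ≤ (1 + 2/(1-(1-e))) * w ^ (t - γ) :=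
          mul_le_mul_of_nonneg_left
            (Real.rpow_le_rpow_of_exponent_le hw (by linarith)) (by positivity)
  · have hs1 : (0:ℝ) < s - 1 := by linarith
    have htγ0 : (0:ℝ) ≤ t - γ := sub_nonneg.2 (F2 hgt)
    refine ⟨1 + 2 * (1 + 1/(s-1)), by positivity, fun w hw => ?_⟩
    have h1 : (1:ℝ) ≤ w ^ (t - γ) := by
      calc (1:ℝ) = w ^ (0:ℝ) := (Real.rpow_zero w).symm
        _ ≤ w ^ (t - γ) := Real.rpow_le_rpow_of_exponent_le hw htγ0
    calc ∑' k : ℤ, NNf s w k ≤ 1 + 2 * (1 + 1/(s-1)) := NN_le_Z hgt w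
      _ ≤ (1 + 2 * (1 + 1/(s-1))) * w ^ (t - γ) :=
          le_mul_of_one_le_right (by positivity) h1

end Stmt12

open Stmt12 in
/-- Convolution-type summability: `sup_{a ∈ ℤ} (1 ∨ |a|)^γ ∑_k (1 ∨ |k|)^{-α} (1 ∨ |a-k|)^{-β}`
is finite in each of the three regimes for `(α, β, γ)`. -/
theorem stmt_12 (α β γ : ℝ) (hα : 0 < α) (hβ : 0 < β) (hγ : 0 < γ)
    (h : (max α β < 1 ∧ 1 < α + β ∧ γ = α + β - 1)
        ∨ (1 < max α β ∧ γ = min α β)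
        ∨ (max α β = 1 ∧ 0 < min α β ∧ γ < min α β)) :
    ∃ C : ℝ, ∀ a : ℤ,
      (max 1 |(a : ℝ)|) ^ γ *
        ∑' k : ℤ, 1 / ((max 1 |(k : ℝ)|) ^ α * (max 1 |(a : ℝ) - (k : ℝ)|) ^ β)
      ≤ C := by
  classical
  have hmax1 : α ≤ max α β := le_max_left α β
  have hmax2 : β ≤ max α β := le_max_right α β
  have hmin1 : min α β ≤ α := min_le_left α β
  have hmin2 : min α β ≤ β := min_le_right α β
  have hminmax : min α β + max α β = α + β := min_add_max α β
  have hmin0 : 0 < min α β := lt_min hα hβ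
  have hαβ : 1 < α + β := by
    rcases h with ⟨h1, h2, h3⟩ | ⟨h1, h2⟩ | ⟨h1, h2, h3⟩ <;> linarith
  have F1 : γ ≤ α + β - 1 := by
    rcases h with ⟨h1, h2, h3⟩ | ⟨h1, h2⟩ | ⟨h1, h2, h3⟩ <;> linarith
  have F2α : 1 < α → γ ≤ β := by
    intro h1a
    rcases h with ⟨h1, h2, h3⟩ | ⟨h1, h2⟩ | ⟨h1, h2, h3⟩ <;> linarith
  have F2β : 1 < β → γ ≤ α := by
    intro h1b
    rcases h with ⟨h1, h2, h3⟩ | ⟨h1, h2⟩ | ⟨h1, h2, h3⟩ <;> linarith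
  have F3α : α = 1 → γ < β := by
    intro h1a
    rcases h with ⟨h1, h2, h3⟩ | ⟨h1, h2⟩ | ⟨h1, h2, h3⟩
    · linarith
    · have hβ1 : 1 < β := by
        by_contra hc
        push_neg at hc
        have : max α β ≤ 1 := max_le (le_of_eq h1a) hc
        linarith
      have hm : min α β = α := min_eq_left (by linarith)
      linarith
    · linarith
  have F3β : β = 1 → γ < α := by
    intro h1b
    rcases h with ⟨h1, h2, h3⟩ | ⟨h1, h2⟩ | ⟨h1, h2, h3⟩
    · linarith
    · have hα1 : 1 < α := by
        by_contra hc
        push_neg at hc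
        have : max α β ≤ 1 := max_le hc (le_of_eq h1b)
        linarith
      have hm : min α β = β := min_eq_right (by linarith)
      linarith
    · linarith
  obtain ⟨Cα, hCα0, hCα⟩ := NBound hα hγ (by linarith : γ ≤ α + β - 1) F2α F3α
  obtain ⟨Cβ, hCβ0, hCβ⟩ := NBound hβ hγ (by linarith : γ ≤ β + α - 1) F2β F3β
  have hCTpos : (0:ℝ) < α + β - 1 := by linarith
  set CT := 2 * 2 ^ (α + β - 1) / (α + β - 1) with hCTdef
  have hCT0 : 0 ≤ CT := by positivity
  refine ⟨2 ^ β * Cα + 2 ^ α * Cβ + 2 * CT, fun a => ?_⟩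
  set w := max 1 |(a : ℝ)| with hwdef
  have hw : 1 ≤ w := le_max_left _ _
  have hw0 : (0:ℝ) < w := lt_of_lt_of_le one_pos hw
  have hw2 : (0:ℝ) ≤ w / 2 := by linarith
  have hw2' : (0:ℝ) < w / 2 := by linarith
  have hma : ∀ k : ℤ, max 1 |(a : ℝ) - (k : ℝ)| = mz (a - k) := by
    intro k; rw [mz, Int.cast_sub]
  have hsum_eq : ∑' k : ℤ, 1 / ((max 1 |(k : ℝ)|) ^ α * (max 1 |(a : ℝ) - (k : ℝ)|) ^ β)
      = ∑' k : ℤ, 1 / (mz k ^ α * mz (a - k) ^ β) :=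
    tsum_congr (fun k => by rw [hma k]; rfl)
  rw [hsum_eq]
  set f : ℤ → ℝ := fun k => 1 / (mz k ^ α * mz (a - k) ^ β) with hfdef
  set g1 : ℤ → ℝ := fun k => (w/2) ^ (-β) * NNf α w k with hg1def
  set g2 : ℤ → ℝ := TTf (α + β) w with hg2def
  set g3 : ℤ → ℝ := fun k => (w/2) ^ (-α) * NNf β w (a - k) with hg3def
  set g4 : ℤ → ℝ := fun k => TTf (α + β) w (a - k) with hg4def
  have hg1n : ∀ k, 0 ≤ g1 k := fun k =>
    mul_nonneg (Real.rpow_nonneg hw2 _) (NNf_nonneg α w k)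
  have hg2n : ∀ k, 0 ≤ g2 k := fun k => TTf_nonneg (α + β) w k
  have hg3n : ∀ k, 0 ≤ g3 k := fun k =>
    mul_nonneg (Real.rpow_nonneg hw2 _) (NNf_nonneg β w _)
  have hg4n : ∀ k, 0 ≤ g4 k := fun k => TTf_nonneg (α + β) w _
  have key : ∀ k : ℤ, f k ≤ g1 k + (g2 k + (g3 k + g4 k)) := by
    intro k
    have h1k : 1 ≤ mz k := one_le_mz k
    have h2k : 1 ≤ mz (a - k) := one_le_mz _
    have h1k0 : 0 < mz k := mz_pos k
    have h2k0 : 0 < mz (a - k) := mz_pos _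
    have habs : |(a:ℝ)| ≤ mz k + mz (a - k) := by
      calc |(a:ℝ)| = |(k:ℝ) + ((a:ℝ) - (k:ℝ))| := by congr 1; ring
        _ ≤ |(k:ℝ)| + |(a:ℝ) - (k:ℝ)| := abs_add_le _ _
        _ ≤ mz k + mz (a - k) := by
            rw [mz, mz, Int.cast_sub]
            exact add_le_add (le_max_right _ _) (le_max_right _ _)
    have hw_le : w ≤ mz k + mz (a - k) := by
      rw [hwdef]
      exact max_le (by linarith) habs
    have hfk : f k = mz k ^ (-α) * mz (a - k) ^ (-β) := by
      simp only [hfdef]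
      rw [Real.rpow_neg h1k0.le, Real.rpow_neg h2k0.le, ← mul_inv, one_div]
    by_cases hc1 : mz k ≤ mz (a - k)
    · by_cases hc2 : mz k ≤ w
      · have hv : w / 2 ≤ mz (a - k) := by linarith
        have hb : mz (a - k) ^ (-β) ≤ (w/2) ^ (-β) :=
          Real.rpow_le_rpow_of_nonpos hw2' hv (by linarith)
        have hf1 : f k ≤ g1 k := by
          rw [hfk]
          simp only [hg1def, NNf]
          rw [if_pos hc2]
          calc mz k ^ (-α) * mz (a - k) ^ (-β) ≤ mz k ^ (-α) * (w/2) ^ (-β) :=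
                mul_le_mul_of_nonneg_left hb (Real.rpow_nonneg h1k0.le _)
            _ = (w/2) ^ (-β) * mz k ^ (-α) := mul_comm _ _
        linarith [hg2n k, hg3n k, hg4n k]
      · push_neg at hc2
        have hf2 : f k ≤ g2 k := by
          rw [hfk]
          simp only [hg2def, TTf]
          rw [if_pos hc2]
          calc mz k ^ (-α) * mz (a - k) ^ (-β) ≤ mz k ^ (-α) * mz k ^ (-β) :=
                mul_le_mul_of_nonneg_left
                  (Real.rpow_le_rpow_of_nonpos h1k0 hc1 (by linarith))
                  (Real.rpow_nonneg h1k0.le _)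
            _ = mz k ^ (-(α + β)) := by
                rw [← Real.rpow_add h1k0]; ring_nf
        linarith [hg1n k, hg3n k, hg4n k]
    · push_neg at hc1
      by_cases hc2 : mz (a - k) ≤ w
      · have hu : w / 2 ≤ mz k := by linarith
        have hb : mz k ^ (-α) ≤ (w/2) ^ (-α) :=
          Real.rpow_le_rpow_of_nonpos hw2' hu (by linarith)
        have hf3 : f k ≤ g3 k := by
          rw [hfk]
          simp only [hg3def, NNf]
          rw [if_pos hc2]
          exact mul_le_mul_of_nonneg_right hb (Real.rpow_nonneg h2k0.le _)
        linarith [hg1n k, hg2n k, hg4n k]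
      · push_neg at hc2
        have hf4 : f k ≤ g4 k := by
          rw [hfk]
          simp only [hg4def, TTf]
          rw [if_pos hc2]
          calc mz k ^ (-α) * mz (a - k) ^ (-β) ≤ mz (a - k) ^ (-α) * mz (a - k) ^ (-β) :=
                mul_le_mul_of_nonneg_right
                  (Real.rpow_le_rpow_of_nonpos h2k0 hc1.le (by linarith))
                  (Real.rpow_nonneg h2k0.le _)
            _ = mz (a - k) ^ (-(α + β)) := by
                rw [← Real.rpow_add h2k0]; ring_nf
        linarith [hg1n k, hg2n k, hg3n k]
  have hfn : ∀ k, 0 ≤ f k := by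
    intro k
    simp only [hfdef]
    exact le_of_lt (div_pos one_pos (mul_pos (Real.rpow_pos_of_pos (mz_pos k) α)
      (Real.rpow_pos_of_pos (mz_pos _) β)))
  have hs1 : Summable g1 := by
    rw [hg1def]; exact (summable_NNf α w).mul_left _
  have hs2 : Summable g2 := by rw [hg2def]; exact summable_TTf hαβ w
  have hsNB : Summable (fun k : ℤ => NNf β w (a - k)) :=
    ((Equiv.subLeft a).summable_iff.2 (summable_NNf β w)).congr
      (fun k => by simp [Equiv.subLeft_apply, Function.comp])
  have hsTB : Summable (fun k : ℤ => TTf (α + β) w (a - k)) :=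
    ((Equiv.subLeft a).summable_iff.2 (summable_TTf hαβ w)).congr
      (fun k => by simp [Equiv.subLeft_apply, Function.comp])
  have hs3 : Summable g3 := by rw [hg3def]; exact hsNB.mul_left _
  have hs4 : Summable g4 := by rw [hg4def]; exact hsTB
  have hg : Summable (fun k => g1 k + (g2 k + (g3 k + g4 k))) :=
    hs1.add (hs2.add (hs3.add hs4))
  have hfs : Summable f := Summable.of_nonneg_of_le hfn key hg
  have hmain : ∑' k : ℤ, f k ≤ ∑' k : ℤ, (g1 k + (g2 k + (g3 k + g4 k))) :=
    Summable.tsum_le_tsum key hfs hg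
  rw [Summable.tsum_add hs1 (hs2.add (hs3.add hs4)), Summable.tsum_add hs2 (hs3.add hs4),
    Summable.tsum_add hs3 hs4] at hmain
  have e1 : ∑' k : ℤ, g1 k = (w/2) ^ (-β) * ∑' k : ℤ, NNf α w k := by
    rw [hg1def]; exact tsum_mul_left
  have e3 : ∑' k : ℤ, g3 k = (w/2) ^ (-α) * ∑' k : ℤ, NNf β w k := by
    rw [hg3def, tsum_mul_left]
    congr 1
    have := (Equiv.subLeft a).tsum_eq (NNf β w)
    simpa [Equiv.subLeft_apply] using this
  have e4 : ∑' k : ℤ, g4 k = ∑' k : ℤ, TTf (α + β) w k := by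
    rw [hg4def]
    have := (Equiv.subLeft a).tsum_eq (TTf (α + β) w)
    simpa [Equiv.subLeft_apply] using this
  rw [e1, e3, e4, hg2def] at hmain
  set A := ∑' k : ℤ, NNf α w k with hA_def
  set B := ∑' k : ℤ, NNf β w k with hB_def
  set T := ∑' k : ℤ, TTf (α + β) w k with hT_def
  have hA : A ≤ Cα * w ^ (β - γ) := hCα w hw
  have hB : B ≤ Cβ * w ^ (α - γ) := hCβ w hw
  have hT : T ≤ CT * w ^ (1 - (α + β)) := by
    rw [hCTdef]
    have := TT_le (s := α + β) hαβ hw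
    calc T ≤ (2 * 2 ^ ((α+β) - 1) / ((α+β) - 1)) * w ^ (1 - (α+β)) := this
      _ = (2 * 2 ^ (α + β - 1) / (α + β - 1)) * w ^ (1 - (α + β)) := by ring_nf
  have h1 : w ^ γ * w ^ (-β) * w ^ (β - γ) = 1 := by
    rw [← Real.rpow_add hw0, ← Real.rpow_add hw0,
      show γ + -β + (β - γ) = 0 from by ring, Real.rpow_zero]
  have h2 : w ^ γ * w ^ (-α) * w ^ (α - γ) = 1 := by
    rw [← Real.rpow_add hw0, ← Real.rpow_add hw0,
      show γ + -α + (α - γ) = 0 from by ring, Real.rpow_zero]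
  have hle3 : w ^ γ * w ^ (1 - (α + β)) ≤ 1 := by
    rw [← Real.rpow_add hw0]
    exact Real.rpow_le_one_of_one_le_of_nonpos hw (by linarith)
  have hwd : ∀ r : ℝ, (w/2) ^ (-r) = 2 ^ r * w ^ (-r) := by
    intro r
    rw [Real.div_rpow hw0.le (by norm_num : (0:ℝ) ≤ 2),
      Real.rpow_neg (by norm_num : (0:ℝ) ≤ 2), div_eq_mul_inv, inv_inv]
    ring
  calc w ^ γ * ∑' k : ℤ, f k
      ≤ w ^ γ * ((w/2) ^ (-β) * A + (T + ((w/2) ^ (-α) * B + T))) :=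
        mul_le_mul_of_nonneg_left hmain (Real.rpow_nonneg hw0.le γ)
    _ ≤ w ^ γ * ((w/2) ^ (-β) * (Cα * w ^ (β - γ)) +
        (CT * w ^ (1 - (α + β)) + ((w/2) ^ (-α) * (Cβ * w ^ (α - γ)) + CT * w ^ (1 - (α + β))))) := by
        apply mul_le_mul_of_nonneg_left _ (Real.rpow_nonneg hw0.le γ)
        have t1 : (w/2) ^ (-β) * A ≤ (w/2) ^ (-β) * (Cα * w ^ (β - γ)) :=
          mul_le_mul_of_nonneg_left hA (Real.rpow_nonneg hw2 _)
        have t3 : (w/2) ^ (-α) * B ≤ (w/2) ^ (-α) * (Cβ * w ^ (α - γ)) :=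
          mul_le_mul_of_nonneg_left hB (Real.rpow_nonneg hw2 _)
        linarith
    _ = (2 ^ β * Cα) * (w ^ γ * w ^ (-β) * w ^ (β - γ)) +
        ((2 ^ α * Cβ) * (w ^ γ * w ^ (-α) * w ^ (α - γ)) +
          (2 * CT) * (w ^ γ * w ^ (1 - (α + β)))) := by
        rw [hwd β, hwd α]; ring
    _ ≤ 2 ^ β * Cα + 2 ^ α * Cβ + 2 * CT := by
        rw [h1, h2, mul_one, mul_one]
        have hlast : (2 * CT) * (w ^ γ * w ^ (1 - (α + β))) ≤ (2 * CT) * 1 :=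
          mul_le_mul_of_nonneg_left hle3 (by positivity)
        linarith
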